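/- (Binary Johnson bound.) Let α ∈ (0, 1/4) and put α' = (1 − √(1 − 4α))/2. For every n ≥ 1: if v_1, …, v_{2n+1} is any list of 2n+1 binary strings of length n, each of Hamming weight at most α'·n, then there exist indices i ≠ j such that dist(v_i, v_j) ≤ 2αn. -/

import Mathlib

open scoped RealInnerProductSpace
open Finset

lemma aux_li {E : Type*} [NormedAddCommGroup E] [InnerProductSpace ℝ E] {k : ℕ}
    (w : Fin (k+1) → E) (hneg : ∀ i j, i ≠ j → ⟪w i, w j⟫ < 0) :
    LinearIndependent ℝ (fun i : Fin k => w i.castSucc) := by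
  rw [Fintype.linearIndependent_iff]
  intro g hg
  set P : Finset (Fin k) := univ.filter (fun i => 0 < g i) with hP
  set N : Finset (Fin k) := univ.filter (fun i => g i < 0) with hN
  set z : E := ∑ i ∈ P, g i • w i.castSucc with hz
  have hsplit : z + ∑ i ∈ N, g i • w i.castSucc = 0 := by
    rw [hz, ← Finset.sum_union]
    · rw [← hg, ← Finset.sum_subset (Finset.subset_univ (P ∪ N))]
      intro x _ hx
      simp only [hP, hN, Finset.mem_union, Finset.mem_filter, Finset.mem_univ, true_and,
        not_or, not_lt] at hx
      have : g x = 0 := le_antisymm hx.1 hx.2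
      simp [this]
    · rw [Finset.disjoint_left]
      intro a ha hb
      simp only [hP, hN, Finset.mem_filter] at ha hb
      exact absurd (ha.2.trans hb.2) (lt_irrefl _)
  have h1 : z = -∑ i ∈ N, g i • w i.castSucc := eq_neg_of_add_eq_zero_left hsplit
  have hcross : ∀ i ∈ P, ∀ j ∈ N, 0 ≤ g i * (g j * ⟪w i.castSucc, w j.castSucc⟫) := by
    intro i hi j hj
    simp only [hP, hN, Finset.mem_filter, Finset.mem_univ, true_and] at hi hj
    have hij : i.castSucc ≠ j.castSucc := by
      simp only [ne_eq, Fin.castSucc_inj]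
      rintro rfl; exact absurd (hi.trans hj) (lt_irrefl _)
    have := hneg _ _ hij
    exact le_of_lt (mul_pos hi (mul_pos_of_neg_of_neg hj this))
  have hzz_expand : ⟪z, z⟫ = -∑ i ∈ P, ∑ j ∈ N, g i * (g j * ⟪w i.castSucc, w j.castSucc⟫) := by
    nth_rewrite 2 [h1]
    rw [inner_neg_right, hz]
    simp only [sum_inner, inner_sum, real_inner_smul_left, real_inner_smul_right, neg_inj]
    rw [Finset.sum_comm]
    refine Finset.sum_congr rfl fun i _ => Finset.sum_congr rfl fun j _ => by ring
  have hz0 : z = 0 := by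
    rw [← inner_self_eq_zero (𝕜 := ℝ)]
    refine le_antisymm ?_ (real_inner_self_nonneg)
    rw [hzz_expand, neg_nonpos]
    exact Finset.sum_nonneg fun i hi => Finset.sum_nonneg fun j hj => hcross i hi j hj
  have hPe : P = ∅ := by
    by_contra hPe
    have hne : P.Nonempty := Finset.nonempty_iff_ne_empty.mpr hPe
    have hexp : ⟪z, w (Fin.last k)⟫ = ∑ i ∈ P, g i * ⟪w i.castSucc, w (Fin.last k)⟫ := by
      rw [hz]
      simp [sum_inner, real_inner_smul_left]
    have hlt : ∑ i ∈ P, g i * ⟪w i.castSucc, w (Fin.last k)⟫ < 0 := by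
      refine Finset.sum_neg (fun i hi => ?_) hne
      simp only [hP, Finset.mem_filter, Finset.mem_univ, true_and] at hi
      have := hneg i.castSucc (Fin.last k) (ne_of_lt (Fin.castSucc_lt_last i))
      exact mul_neg_of_pos_of_neg hi this
    rw [← hexp, hz0, inner_zero_left] at hlt
    exact absurd hlt (lt_irrefl _)
  have hNe : N = ∅ := by
    by_contra hNe
    have hne : N.Nonempty := Finset.nonempty_iff_ne_empty.mpr hNe
    have hz0' : ∑ i ∈ N, g i • w i.castSucc = 0 := by
      have := h1; rw [hz0] at this
      exact (neg_eq_zero.mp this.symm)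
    have hexp : ⟪∑ i ∈ N, g i • w i.castSucc, w (Fin.last k)⟫
        = ∑ i ∈ N, g i * ⟪w i.castSucc, w (Fin.last k)⟫ := by
      simp [sum_inner, real_inner_smul_left]
    have hgt : 0 < ∑ i ∈ N, g i * ⟪w i.castSucc, w (Fin.last k)⟫ := by
      refine Finset.sum_pos (fun i hi => ?_) hne
      simp only [hN, Finset.mem_filter, Finset.mem_univ, true_and] at hi
      have := hneg i.castSucc (Fin.last k) (ne_of_lt (Fin.castSucc_lt_last i))
      exact mul_pos_of_neg_of_neg hi this
    rw [← hexp, hz0', inner_zero_left] at hgt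
    exact absurd hgt (lt_irrefl _)
  intro i
  by_contra hgi
  rcases lt_or_gt_of_ne hgi with h | h
  · have : i ∈ N := by simp [hN, h]
    rw [hNe] at this; exact absurd this (Finset.notMem_empty i)
  · have : i ∈ P := by simp [hP, h]
    rw [hPe] at this; exact absurd this (Finset.notMem_empty i)

/-- Binary Johnson bound: among `2n+1` binary strings of length `n`, each of
Hamming weight at most `α'·n` (where `α' = (1 − √(1 − 4α))/2`), some two are at
Hamming distance at most `2αn`. -/
theorem stmt2 (α : ℝ) (hα0 : 0 < α) (hα1 : α < 1 / 4)
    (α' : ℝ) (hα' : α' = (1 - Real.sqrt (1 - 4 * α)) / 2)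
    (n : ℕ) (hn : 1 ≤ n)
    (v : Fin (2 * n + 1) → (Fin n → Bool))
    (hw : ∀ i, (hammingDist (v i) (fun _ => false) : ℝ) ≤ α' * n) :
    ∃ i j, i ≠ j ∧ (hammingDist (v i) (v j) : ℝ) ≤ 2 * α * n := by
  by_contra hcon
  push_neg at hcon
  -- basic facts about α'
  have hs0 : (0:ℝ) ≤ 1 - 4 * α := by linarith
  have hsq : Real.sqrt (1 - 4 * α) ^ 2 = 1 - 4 * α := Real.sq_sqrt hs0
  have hsnn : 0 ≤ Real.sqrt (1 - 4 * α) := Real.sqrt_nonneg _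
  have hαα : α' * (1 - α') = α := by rw [hα']; nlinarith [hsq]
  have hhalf : α' ≤ 1 / 2 := by rw [hα']; linarith
  -- the shifted vectors
  set u : Fin (2 * n + 1) → EuclideanSpace ℝ (Fin n) :=
    fun i => WithLp.toLp 2 (fun k => (if v i k then (1:ℝ) else 0) - α') with hu
  -- weight as a sum
  have hwt : ∀ x : Fin n → Bool, (hammingDist x (fun _ => false) : ℝ)
      = ∑ k, (if x k then (1:ℝ) else 0) := by
    intro x
    rw [hammingDist, Finset.card_filter]
    push_cast
    refine Finset.sum_congr rfl fun k _ => by cases h : x k <;> simp [h]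
  have hdist : ∀ x y : Fin n → Bool, (hammingDist x y : ℝ)
      = ∑ k, (if x k = y k then (0:ℝ) else 1) := by
    intro x y
    rw [hammingDist, Finset.card_filter]
    push_cast
    refine Finset.sum_congr rfl fun k _ => by by_cases h : x k = y k <;> simp [h]
  -- key inner product bound
  have key : ∀ i j, ⟪u i, u j⟫ ≤ α * n - (hammingDist (v i) (v j) : ℝ) / 2 := by
    intro i j
    have hinner : ⟪u i, u j⟫ = ∑ k, ((if v i k then (1:ℝ) else 0) - α')
        * ((if v j k then (1:ℝ) else 0) - α') := by
      rw [PiLp.inner_apply]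
      exact Finset.sum_congr rfl fun k _ => mul_comm _ _
    have hexp : ⟪u i, u j⟫ = (1/2 - α') * ((hammingDist (v i) (fun _ => false) : ℝ)
          + (hammingDist (v j) (fun _ => false) : ℝ))
        - (hammingDist (v i) (v j) : ℝ) / 2 + α' ^ 2 * n := by
      rw [hinner, hwt, hwt, hdist]
      rw [← Finset.sum_add_distrib, Finset.mul_sum, Finset.sum_div, ← Finset.sum_sub_distrib]
      rw [show α' ^ 2 * (n:ℝ) = ∑ _k : Fin n, α' ^ 2 by simp [mul_comm], ← Finset.sum_add_distrib]
      refine Finset.sum_congr rfl fun k _ => ?_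
      cases h1 : v i k <;> cases h2 : v j k <;> simp [h1, h2] <;> ring
    rw [hexp]
    nlinarith [hw i, hw j, (Nat.cast_nonneg (hammingDist (v i) (v j)) : (0:ℝ) ≤ _), hαα,
      mul_le_mul_of_nonneg_left (add_le_add (hw i) (hw j)) (by linarith : (0:ℝ) ≤ 1/2 - α')]
  -- restrict to n+2 vectors
  have hle : n + 2 ≤ 2 * n + 1 := by omega
  set u' : Fin (n + 1 + 1) → EuclideanSpace ℝ (Fin n) :=
    fun i => u (Fin.castLE hle i) with hu'
  have hneg : ∀ i j, i ≠ j → ⟪u' i, u' j⟫ < 0 := by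
    intro i j hij
    have hij' : Fin.castLE hle i ≠ Fin.castLE hle j :=
      fun h => hij (Fin.castLE_injective hle h)
    have := key (Fin.castLE hle i) (Fin.castLE hle j)
    have hd := hcon _ _ hij'
    calc ⟪u' i, u' j⟫ ≤ α * n - (hammingDist (v (Fin.castLE hle i)) (v (Fin.castLE hle j)) : ℝ) / 2 := this
      _ < 0 := by linarith
  have li := aux_li u' hneg
  have hcard := li.fintype_card_le_finrank
  rw [finrank_euclideanSpace_fin] at hcard
  simp at hcard
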